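/- Let d ≥ 1, let w ∈ ℤ^d, let B = 2w + {0,1}^d, let g : B → ℝ, and let μ := 2^{−d}·Σ_{u∈B} g(u). Then Σ_{u∈B} |g(u) − μ| ≤ Σ over edges {u,v} ∈ E(ℤ^d) with u, v ∈ B of |g(u) − g(v)|. -/

import Mathlib

namespace DF

/-- The base lattice `ℤ^d`. -/
abbrev Base (d : ℕ) := Fin d → ℤ

/-- ℓ¹ distance on the base lattice. -/
def dist1 {d : ℕ} (u v : Base d) : ℤ := ∑ i, |u i - v i|

/-- Nearest-neighbour adjacency on the base lattice. -/
def baseAdj {d : ℕ} (u v : Base d) : Prop := dist1 u v = 1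

/-- Edges of the base lattice `ℤ^d`: unordered pairs at ℓ¹-distance 1. -/
def IsBaseEdge {d : ℕ} (e : Sym2 (Base d)) : Prop :=
  ∃ u v : Base d, baseAdj u v ∧ e = s(u, v)

/-- `|τ u − τ v|` over an unordered pair. -/
def pairAbsDiff {d : ℕ} (τ : Base d → ℤ) : Sym2 (Base d) → ℤ :=
  Sym2.lift ⟨fun u v => |τ u - τ v|, fun _ _ => abs_sub_comm _ _⟩

/-- A shift: a finitely supported `τ : ℤ^d → ℤ`. -/
def IsShift {d : ℕ} (τ : Base d → ℤ) : Prop := {v | τ v ≠ 0}.Finite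

/-- Total variation of a shift: the sum of `|τ u − τ v|` over all edges. -/
noncomputable def TV {d : ℕ} (τ : Base d → ℤ) : ℤ :=
  ∑ᶠ e ∈ {e : Sym2 (Base d) | IsBaseEdge e}, pairAbsDiff τ e

/-- Total variation of `τ` restricted to edges with both endpoints in `A`. -/
noncomputable def TVon {d : ℕ} (τ : Base d → ℤ) (A : Set (Base d)) : ℤ :=
  ∑ᶠ e ∈ {e : Sym2 (Base d) | IsBaseEdge e ∧ ∀ x ∈ e, x ∈ A}, pairAbsDiff τ e

/-- The discrete cube `Q_N(c) = c + {0,1,…,N−1}^d` as a finset. -/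
noncomputable def cubeFinset {d : ℕ} (N : ℕ) (c : Base d) : Finset (Base d) :=
  Fintype.piFinset fun i => Finset.Ico (c i) (c i + (N : ℤ))

/-- The base point `N·⌊u/N⌋` of the cube of side `N` containing `u`. -/
def cubePt {d : ℕ} (N : ℕ) (u : Base d) : Base d := fun i => N * Int.fdiv (u i) N

/-- The average `τ^rough_N(u)` of `τ` over the cube of the partition `𝒫_N`
containing `u`. -/
noncomputable def roughAvg {d : ℕ} (N : ℕ) (τ : Base d → ℤ) (u : Base d) : ℝ :=
  (∑ w ∈ cubeFinset N (cubePt N u), (τ w : ℝ)) / (N : ℝ) ^ d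

/-- The integer nearest to `a`, with the convention `[k + 1/2] = k`. -/
noncomputable def nearestInt (a : ℝ) : ℤ := ⌈a - 1 / 2⌉

/-- The coarse graining `τ_N`. -/
noncomputable def coarse {d : ℕ} (N : ℕ) (τ : Base d → ℤ) (u : Base d) : ℤ :=
  nearestInt (roughAvg N τ u)

end DF

namespace DF

/-- `|g u − g v|` over an unordered pair, for a real-valued function. -/
def pairAbsR {d : ℕ} (g : Base d → ℝ) : Sym2 (Base d) → ℝ :=
  Sym2.lift ⟨fun u v => |g u - g v|, fun _ _ => abs_sub_comm _ _⟩

end DF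

open DF

namespace DFAux
open DF Finset

variable {d : ℕ}

def toPt (c : Base d) (b : Fin d → Bool) : Base d := fun i => c i + if b i then 1 else 0

lemma toPt_inj (c : Base d) : Function.Injective (toPt c) := by
  intro a b h
  funext i
  have h' := congrFun h i
  simp only [toPt] at h'
  cases ha : a i <;> cases hb : b i <;> simp [ha, hb] at h' ⊢ <;> omega

lemma mem_cube_iff (c u : Base d) :
    u ∈ cubeFinset 2 c ↔ ∀ i, u i = c i ∨ u i = c i + 1 := by
  simp only [cubeFinset, Fintype.mem_piFinset, Finset.mem_Ico]
  constructor <;> intro h i <;> have := h i <;> omega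

lemma image_toPt (c : Base d) :
    Finset.image (toPt c) Finset.univ = cubeFinset 2 c := by
  ext u
  simp only [Finset.mem_image, Finset.mem_univ, true_and, mem_cube_iff]
  constructor
  · rintro ⟨b, rfl⟩ i
    cases hb : b i <;> simp [toPt, hb]
  · intro h
    refine ⟨fun i => decide (u i = c i + 1), ?_⟩
    funext i
    rcases h i with h' | h' <;> simp [toPt, h'] <;> omega

def bflip (k : Fin d) (b : Fin d → Bool) : Fin d → Bool := Function.update b k (!(b k))

lemma bflip_apply_self (k : Fin d) (b : Fin d → Bool) : bflip k b k = !(b k) := by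
  simp [bflip]

lemma bflip_apply_ne (k : Fin d) (b : Fin d → Bool) {j : Fin d} (h : j ≠ k) :
    bflip k b j = b j := by
  simp [bflip, Function.update_of_ne h]

lemma bflip_bflip (k : Fin d) (b : Fin d → Bool) : bflip k (bflip k b) = b := by
  funext j
  by_cases hj : j = k
  · subst hj; rw [bflip_apply_self, bflip_apply_self, Bool.not_not]
  · rw [bflip_apply_ne _ _ hj, bflip_apply_ne _ _ hj]

lemma bflip_ne (k : Fin d) (b : Fin d → Bool) : bflip k b ≠ b := by
  intro h
  have := congrFun h k
  rw [bflip_apply_self] at this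
  cases hb : b k <;> rw [hb] at this <;> simp at this

noncomputable def edgeOf (c : Base d) (p : (Fin d → Bool) × Fin d) : Sym2 (Base d) :=
  s(toPt c p.1, toPt c (bflip p.2 p.1))

lemma pairAbsR_edgeOf (c : Base d) (g : Base d → ℝ) (p : (Fin d → Bool) × Fin d) :
    pairAbsR g (edgeOf c p) = |g (toPt c p.1) - g (toPt c (bflip p.2 p.1))| := rfl

end DFAux

namespace DFAux
open DF Finset

variable {d : ℕ}

lemma dist1_toPt_bflip (c : Base d) (b : Fin d → Bool) (k : Fin d) :
    baseAdj (toPt c b) (toPt c (bflip k b)) := by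
  unfold baseAdj dist1
  have : ∀ i, |toPt c b i - toPt c (bflip k b) i| = if i = k then 1 else 0 := by
    intro i
    by_cases hi : i = k
    · subst hi
      simp only [toPt, bflip_apply_self]
      cases hb : b i <;> simp [hb]
    · simp [toPt, bflip_apply_ne k b hi, hi]
  simp [this]

lemma edgeSet_eq (c : Base d) :
    {e : Sym2 (Base d) | IsBaseEdge e ∧
        ∀ x ∈ e, x ∈ (cubeFinset 2 c : Set (Base d))}
      = ↑(Finset.image (edgeOf c) Finset.univ) := by
  ext e
  simp only [Set.mem_setOf_eq, Finset.coe_image, Set.mem_image, Finset.mem_coe,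
    Finset.coe_univ, Set.mem_univ, true_and]
  constructor
  · rintro ⟨⟨u, v, hadj, rfl⟩, hmem⟩
    have hu : u ∈ cubeFinset 2 c := hmem u (by simp)
    have hv : v ∈ cubeFinset 2 c := hmem v (by simp)
    rw [← image_toPt] at hu hv
    obtain ⟨b, -, rfl⟩ := Finset.mem_image.mp hu
    obtain ⟨b', -, rfl⟩ := Finset.mem_image.mp hv
    unfold baseAdj dist1 at hadj
    -- find the unique coordinate where they differ
    have hne : ∃ k, toPt c b k ≠ toPt c b' k := by
      by_contra hno
      push_neg at hno
      have : ∀ i, |toPt c b i - toPt c b' i| = 0 := fun i => by rw [hno i]; simp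
      simp [this] at hadj
    obtain ⟨k, hk⟩ := hne
    have hk1 : 1 ≤ |toPt c b k - toPt c b' k| :=
      Int.one_le_abs (sub_ne_zero.mpr hk)
    have hrest : ∀ j, j ≠ k → toPt c b j = toPt c b' j := by
      intro j hj
      have hsplit := Finset.add_sum_erase Finset.univ
        (fun i => |toPt c b i - toPt c b' i|) (Finset.mem_univ k)
      have hjmem : j ∈ Finset.univ.erase k := Finset.mem_erase.mpr ⟨hj, Finset.mem_univ j⟩
      have hsingle : |toPt c b j - toPt c b' j| ≤
          ∑ i ∈ Finset.univ.erase k, |toPt c b i - toPt c b' i| :=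
        Finset.single_le_sum (f := fun i => |toPt c b i - toPt c b' i|)
          (fun i _ => abs_nonneg _) hjmem
      have habs : (0:ℤ) ≤ |toPt c b j - toPt c b' j| := abs_nonneg _
      have htot : |toPt c b k - toPt c b' k| +
          ∑ i ∈ Finset.univ.erase k, |toPt c b i - toPt c b' i| = 1 := by
        rw [hsplit]; exact hadj
      have : |toPt c b j - toPt c b' j| = 0 := by linarith
      have := abs_eq_zero.mp this
      linarith [sub_eq_zero.mp this]
    -- b' k ≠ b k
    have hbk : b' k = !(b k) := by
      have : b k ≠ b' k := by
        intro h; exact hk (by simp [toPt, h])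
      cases h1 : b k <;> cases h2 : b' k <;> rw [h1, h2] at this <;> simp_all
    have hb' : b' = bflip k b := by
      funext j
      by_cases hj : j = k
      · subst hj; rw [hbk, bflip_apply_self]
      · rw [bflip_apply_ne k b hj]
        have := hrest j hj
        simp only [toPt, add_right_inj] at this
        cases h1 : b j <;> cases h2 : b' j <;> rw [h1, h2] at this <;> simp_all
    exact ⟨(b, k), by rw [edgeOf, hb']⟩
  · rintro ⟨⟨b, k⟩, rfl⟩
    refine ⟨⟨_, _, dist1_toPt_bflip c b k, rfl⟩, ?_⟩
    intro x hx
    rw [edgeOf, Sym2.mem_iff] at hx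
    have h1 : toPt c b ∈ cubeFinset 2 c := by
      rw [← image_toPt]; exact Finset.mem_image_of_mem _ (Finset.mem_univ _)
    have h2 : toPt c (bflip k b) ∈ cubeFinset 2 c := by
      rw [← image_toPt]; exact Finset.mem_image_of_mem _ (Finset.mem_univ _)
    rcases hx with rfl | rfl <;> assumption

lemma fiber_eq (c : Base d) (b : Fin d → Bool) (k : Fin d) :
    Finset.univ.filter (fun p : (Fin d → Bool) × Fin d => edgeOf c p = edgeOf c (b, k))
      = {(b, k), (bflip k b, k)} := by
  ext ⟨b₁, k₁⟩
  simp only [Finset.mem_filter, Finset.mem_univ, true_and, Finset.mem_insert,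
    Finset.mem_singleton, Prod.mk.injEq, edgeOf, Sym2.eq_iff]
  constructor
  · rintro (⟨h1, h2⟩ | ⟨h1, h2⟩)
    · have hb1 : b₁ = b := toPt_inj c h1
      subst hb1
      have hf : bflip k₁ b₁ = bflip k b₁ := toPt_inj c h2
      have hkk : k₁ = k := by
        by_contra hne
        have := congrFun hf k₁
        rw [bflip_apply_self, bflip_apply_ne k b₁ hne] at this
        cases hb : b₁ k₁ <;> rw [hb] at this <;> simp at this
      exact Or.inl ⟨rfl, hkk⟩
    · have hb1 : b₁ = bflip k b := toPt_inj c h1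
      subst hb1
      have hf : bflip k₁ (bflip k b) = b := toPt_inj c h2
      have hkk : k₁ = k := by
        by_contra hne
        have := congrFun hf k₁
        rw [bflip_apply_self, bflip_apply_ne k b hne] at this
        cases hb : b k₁ <;> rw [hb] at this <;> simp at this
      exact Or.inr ⟨rfl, hkk⟩
  · rintro (⟨rfl, rfl⟩ | ⟨rfl, rfl⟩)
    · exact Or.inl ⟨rfl, rfl⟩
    · exact Or.inr ⟨rfl, by rw [bflip_bflip]⟩

lemma sum_over_pairs (c : Base d) (g : Base d → ℝ) :
    ∑ p : (Fin d → Bool) × Fin d, pairAbsR g (edgeOf c p)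
      = 2 * ∑ e ∈ Finset.image (edgeOf c) Finset.univ, pairAbsR g e := by
  rw [Finset.sum_comp (pairAbsR g) (edgeOf c), Finset.mul_sum]
  refine Finset.sum_congr rfl ?_
  intro e he
  obtain ⟨⟨b, k⟩, -, rfl⟩ := Finset.mem_image.mp he
  rw [fiber_eq]
  have hne : (b, k) ∉ ({(bflip k b, k)} : Finset ((Fin d → Bool) × Fin d)) := by
    simp only [Finset.mem_singleton, Prod.mk.injEq, not_and]
    intro h _; exact absurd h.symm (bflip_ne k b)
  rw [Finset.card_insert_of_notMem hne, Finset.card_singleton]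
  simp [two_smul, two_mul]

end DFAux

namespace DFAux
open DF Finset

variable {d : ℕ}

def mpath (u v : Fin d → Bool) (k : ℕ) : Fin d → Bool :=
  fun i => if (i : ℕ) < k then v i else u i

lemma mpath_zero (u v : Fin d → Bool) : mpath u v 0 = u := by
  funext i; simp [mpath]

lemma mpath_top (u v : Fin d → Bool) : mpath u v d = v := by
  funext i; simp [mpath, i.isLt]

lemma mpath_succ (u v : Fin d → Bool) {k : ℕ} (hk : k < d) :
    mpath u v (k + 1) = Function.update (mpath u v k) ⟨k, hk⟩ (v ⟨k, hk⟩) := by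
  funext i
  rcases lt_trichotomy (i : ℕ) k with h | h | h
  · rw [Function.update_of_ne (by simp only [ne_eq, Fin.ext_iff]; omega)]
    simp only [mpath]
    rw [if_pos (by omega), if_pos (by omega)]
  · have : i = ⟨k, hk⟩ := Fin.ext h
    subst this
    simp only [mpath, Function.update_self]
    rw [if_pos (by omega)]
  · rw [Function.update_of_ne (by simp only [ne_eq, Fin.ext_iff]; omega)]
    simp only [mpath]
    rw [if_neg (by omega), if_neg (by omega)]

lemma abs_le_path (G : (Fin d → Bool) → ℝ) (u v : Fin d → Bool) :
    |G u - G v| ≤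
      ∑ K : Fin d, |G (mpath u v (K : ℕ)) - G (mpath u v ((K : ℕ) + 1))| := by
  rw [Fin.sum_univ_eq_sum_range (fun k => |G (mpath u v k) - G (mpath u v (k + 1))|) d]
  calc |G u - G v|
      = |∑ k ∈ Finset.range d, (G (mpath u v k) - G (mpath u v (k + 1)))| := by
        rw [Finset.sum_range_sub' (fun k => G (mpath u v k)) d, mpath_zero, mpath_top]
    _ ≤ _ := Finset.abs_sum_le_sum_abs _ _

lemma sum_eval (h : Bool → ℝ) (K : Fin d) :
    ∑ b : Fin d → Bool, h (b K) = 2 ^ (d - 1) * (h false + h true) := by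
  classical
  have := Fintype.sum_equiv (Equiv.piSplitAt K (fun _ => Bool))
    (fun b : Fin d → Bool => h (b K))
    (fun p : Bool × ({j : Fin d // j ≠ K} → Bool) => h p.1) (fun b => rfl)
  rw [this, Fintype.sum_prod_type]
  have hcard : Fintype.card ({j : Fin d // j ≠ K} → Bool) = 2 ^ (d - 1) := by
    rw [Fintype.card_fun, Fintype.card_bool, Fintype.card_subtype_compl,
      Fintype.card_subtype_eq, Fintype.card_fin]
  simp only [Finset.sum_const, Finset.card_univ, hcard, nsmul_eq_mul]
  push_cast
  rw [Fintype.sum_bool]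
  ring

lemma sum_step (G : (Fin d → Bool) → ℝ) (K : Fin d) :
    ∑ u : Fin d → Bool, ∑ v : Fin d → Bool,
      |G (mpath u v (K : ℕ)) - G (mpath u v ((K : ℕ) + 1))|
      = 2 ^ (d - 1) * ∑ a : Fin d → Bool, |G a - G (bflip K a)| := by
  classical
  set sw : ((Fin d → Bool) × (Fin d → Bool)) → ((Fin d → Bool) × (Fin d → Bool)) :=
    fun p => (fun i => if (i : ℕ) < (K : ℕ) then p.2 i else p.1 i,
              fun i => if (i : ℕ) < (K : ℕ) then p.1 i else p.2 i) with hsw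
  have hinv : Function.Involutive sw := by
    intro p
    refine Prod.ext ?_ ?_ <;> funext i <;> simp only [hsw] <;> split <;> rfl
  set F : ((Fin d → Bool) × (Fin d → Bool)) → ℝ :=
    fun p => |G p.1 - G (Function.update p.1 K (p.2 K))| with hF
  have key : ∀ u v : Fin d → Bool,
      |G (mpath u v (K : ℕ)) - G (mpath u v ((K : ℕ) + 1))| = F (sw (u, v)) := by
    intro u v
    have h2 : (sw (u, v)).2 K = v K := if_neg (lt_irrefl (K : ℕ))
    have hFv : F (sw (u, v)) =
        |G ((sw (u, v)).1) - G (Function.update ((sw (u, v)).1) K ((sw (u, v)).2 K))| := rfl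
    rw [mpath_succ u v K.isLt, Fin.eta, hFv, h2]
    rfl
  calc ∑ u : Fin d → Bool, ∑ v : Fin d → Bool,
        |G (mpath u v (K : ℕ)) - G (mpath u v ((K : ℕ) + 1))|
      = ∑ p : (Fin d → Bool) × (Fin d → Bool), F (sw p) := by
        rw [show (∑ u : Fin d → Bool, ∑ v : Fin d → Bool,
            |G (mpath u v (K : ℕ)) - G (mpath u v ((K : ℕ) + 1))|)
          = ∑ u : Fin d → Bool, ∑ v : Fin d → Bool, F (sw (u, v)) from
            Finset.sum_congr rfl fun u _ => Finset.sum_congr rfl fun v _ => key u v]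
        exact (Fintype.sum_prod_type (fun p => F (sw p))).symm
    _ = ∑ p : (Fin d → Bool) × (Fin d → Bool), F p := hinv.bijective.sum_comp F
    _ = ∑ a : Fin d → Bool, ∑ b : Fin d → Bool,
          |G a - G (Function.update a K (b K))| := by
        rw [Fintype.sum_prod_type]
    _ = ∑ a : Fin d → Bool, 2 ^ (d - 1) *
          (|G a - G (Function.update a K false)| + |G a - G (Function.update a K true)|) := by
        refine Fintype.sum_congr _ _ (fun a => ?_)
        exact sum_eval (fun s => |G a - G (Function.update a K s)|) K
    _ = 2 ^ (d - 1) * ∑ a : Fin d → Bool, |G a - G (bflip K a)| := by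
        rw [Finset.mul_sum]
        refine Fintype.sum_congr _ _ (fun a => ?_)
        congr 1
        cases ha : a K
        · rw [show Function.update a K false = a by rw [← ha]; exact Function.update_eq_self K a,
             show Function.update a K true = bflip K a by rw [bflip, ha, Bool.not_false]]
          simp
        · rw [show Function.update a K true = a by rw [← ha]; exact Function.update_eq_self K a,
             show Function.update a K false = bflip K a by rw [bflip, ha, Bool.not_true]]
          simp [add_comm]
  done

end DFAux


open DFAux

/-- For `B = 2w + {0,1}^d` and `g : B → ℝ` with mean `μ`,
`Σ_{u∈B} |g(u) − μ| ≤ Σ_{edges {u,v} ⊆ B} |g(u) − g(v)|`. -/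
theorem mean_deviation_le_edge_variation_on_binary_cube
    (d : ℕ) (hd : 1 ≤ d) (w : Base d) (g : Base d → ℝ) :
    ∑ u ∈ cubeFinset 2 (fun i => 2 * w i),
        |g u - (∑ x ∈ cubeFinset 2 (fun i => 2 * w i), g x) / 2 ^ d| ≤
      ∑ᶠ e ∈ {e : Sym2 (Base d) | IsBaseEdge e ∧
          ∀ x ∈ e, x ∈ (cubeFinset 2 (fun i => 2 * w i) : Set (Base d))},
        pairAbsR g e := by
  classical
  set c : Base d := fun i => 2 * w i with hc
  set G : (Fin d → Bool) → ℝ := fun b => g (toPt c b) with hG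
  have hGdef : ∀ b, G b = g (toPt c b) := fun b => by rw [hG]
  set T : ℝ := ∑ K : Fin d, ∑ a : Fin d → Bool, |G a - G (bflip K a)| with hT
  have hinj : ∀ x ∈ (Finset.univ : Finset (Fin d → Bool)), ∀ y ∈ Finset.univ,
      toPt c x = toPt c y → x = y := fun x _ y _ h => toPt_inj c h
  have hS : ∑ x ∈ cubeFinset 2 c, g x = ∑ b : Fin d → Bool, G b := by
    rw [← image_toPt c, Finset.sum_image hinj]
  have hL : ∑ u ∈ cubeFinset 2 c, |g u - (∑ x ∈ cubeFinset 2 c, g x) / 2 ^ d|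
      = ∑ a : Fin d → Bool, |G a - (∑ b : Fin d → Bool, G b) / 2 ^ d| := by
    rw [hS, ← image_toPt c, Finset.sum_image hinj]
  have hcard : (Finset.univ : Finset (Fin d → Bool)).card = 2 ^ d := by simp
  have step1 : ∀ a : Fin d → Bool,
      |G a - (∑ b : Fin d → Bool, G b) / 2 ^ d|
        ≤ (∑ b : Fin d → Bool, |G a - G b|) / (2 : ℝ) ^ d := by
    intro a
    have he : G a - (∑ b : Fin d → Bool, G b) / 2 ^ d
        = (∑ b : Fin d → Bool, (G a - G b)) / 2 ^ d := by
      rw [Finset.sum_sub_distrib, Finset.sum_const, hcard]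
      have h2d : ((2 : ℝ) ^ d) ≠ 0 := by positivity
      field_simp
      ring
    rw [he, abs_div, abs_of_pos (show (0:ℝ) < 2 ^ d by positivity)]
    gcongr
    exact Finset.abs_sum_le_sum_abs _ _
  have step2 : ∑ a : Fin d → Bool, ∑ b : Fin d → Bool, |G a - G b|
      ≤ 2 ^ (d - 1) * T := by
    calc ∑ a : Fin d → Bool, ∑ b : Fin d → Bool, |G a - G b|
        ≤ ∑ a : Fin d → Bool, ∑ b : Fin d → Bool, ∑ K : Fin d,
            |G (mpath a b (K : ℕ)) - G (mpath a b ((K : ℕ) + 1))| :=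
          Finset.sum_le_sum fun a _ => Finset.sum_le_sum fun b _ => abs_le_path G a b
      _ = ∑ a : Fin d → Bool, ∑ K : Fin d, ∑ b : Fin d → Bool,
            |G (mpath a b (K : ℕ)) - G (mpath a b ((K : ℕ) + 1))| :=
          Finset.sum_congr rfl fun a _ => Finset.sum_comm
      _ = ∑ K : Fin d, ∑ a : Fin d → Bool, ∑ b : Fin d → Bool,
            |G (mpath a b (K : ℕ)) - G (mpath a b ((K : ℕ) + 1))| := Finset.sum_comm
      _ = ∑ K : Fin d, 2 ^ (d - 1) * ∑ a : Fin d → Bool, |G a - G (bflip K a)| :=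
          Finset.sum_congr rfl fun K _ => sum_step G K
      _ = 2 ^ (d - 1) * T := by rw [hT, Finset.mul_sum]
  have hR : ∑ e ∈ Finset.image (edgeOf c) Finset.univ, pairAbsR g e = T / 2 := by
    have h1 := sum_over_pairs c g
    have h2 : ∑ p : (Fin d → Bool) × Fin d, pairAbsR g (edgeOf c p)
        = ∑ a : Fin d → Bool, ∑ K : Fin d, |G a - G (bflip K a)| := by
      rw [Fintype.sum_prod_type]
      refine Finset.sum_congr rfl fun a _ => Finset.sum_congr rfl fun K _ => ?_
      rw [pairAbsR_edgeOf, hGdef, hGdef]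
    have h3 : (∑ a : Fin d → Bool, ∑ K : Fin d, |G a - G (bflip K a)|) = T :=
      Finset.sum_comm
    rw [h2, h3] at h1
    linarith
  rw [edgeSet_eq c, finsum_mem_coe_finset, hL, hR]
  calc ∑ a : Fin d → Bool, |G a - (∑ b : Fin d → Bool, G b) / 2 ^ d|
      ≤ ∑ a : Fin d → Bool, (∑ b : Fin d → Bool, |G a - G b|) / (2 : ℝ) ^ d :=
        Finset.sum_le_sum fun a _ => step1 a
    _ = (∑ a : Fin d → Bool, ∑ b : Fin d → Bool, |G a - G b|) / (2 : ℝ) ^ d := by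
        rw [Finset.sum_div]
    _ ≤ (2 ^ (d - 1) * T) / (2 : ℝ) ^ d := by gcongr
    _ = T / 2 := by
        rw [show (2 : ℝ) ^ d = 2 ^ (d - 1) * 2 by
          rw [← pow_succ]; congr 1; omega]
        exact mul_div_mul_left T 2 (by positivity)
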